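/- Let α and γ be finite types and let T be a row-stochastic matrix on α ⊕ γ such that every state Sum.inl a is absorbing, and suppose det (1 - S2) ≠ 0. Then there exists a unique vector t : (α ⊕ γ) → ℝ satisfying (i) t (Sum.inl a) = 0 for all a : α, and (ii) t (Sum.inr b) = 1 + ∑ s', T (Sum.inr b) s' * t s' for all b : γ; moreover t s = ∑ b : γ, det (M.updateColumn s (e b)) / det M, where e b : α ⊕ γ → ℝ is the standard basis vector supported at Sum.inr b and M.updateColumn s (e b) replaces the column of M indexed by s with e b. -/

import Mathlib

open Matrix

theorem absorption_time_formula {α γ : Type*} [Fintype α] [Fintype γ]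
    [DecidableEq α] [DecidableEq γ]
    (T : Matrix (α ⊕ γ) (α ⊕ γ) ℝ)
    (hT0 : ∀ s s', 0 ≤ T s s') (hT1 : ∀ s, ∑ s', T s s' = 1)
    (habs : ∀ (a : α) (s' : α ⊕ γ),
      T (Sum.inl a) s' = if s' = Sum.inl a then 1 else 0)
    (S1 : Matrix γ α ℝ) (hS1 : S1 = Matrix.of fun b a => T (Sum.inr b) (Sum.inl a))
    (S2 : Matrix γ γ ℝ) (hS2 : S2 = Matrix.of fun b b' => T (Sum.inr b) (Sum.inr b'))
    (M : Matrix (α ⊕ γ) (α ⊕ γ) ℝ) (hM : M = -Matrix.fromBlocks 1 0 S1 (S2 - 1))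
    (hdet : Matrix.det (1 - S2) ≠ 0) :
    (∃! t : (α ⊕ γ) → ℝ,
      (∀ a : α, t (Sum.inl a) = 0) ∧
      (∀ b : γ, t (Sum.inr b) = 1 + ∑ s', T (Sum.inr b) s' * t s')) ∧
    (∀ t : (α ⊕ γ) → ℝ,
      ((∀ a : α, t (Sum.inl a) = 0) ∧
       (∀ b : γ, t (Sum.inr b) = 1 + ∑ s', T (Sum.inr b) s' * t s')) →
      ∀ s : α ⊕ γ,
        t s = ∑ b : γ,
          Matrix.det (M.updateCol s fun x => if x = Sum.inr b then 1 else 0)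
            / Matrix.det M) := by
  classical
  -- det M ≠ 0
  have hS2det : (S2 - 1).det ≠ 0 := by
    intro h
    apply hdet
    have h1 : (1 - S2) = -(S2 - 1) := by rw [neg_sub]
    rw [h1, Matrix.det_neg, h, mul_zero]
  have hdetM : M.det ≠ 0 := by
    rw [hM, Matrix.det_neg, Matrix.det_fromBlocks_zero₁₂, Matrix.det_one, one_mul]
    exact mul_ne_zero (pow_ne_zero _ (neg_ne_zero.mpr one_ne_zero)) hS2det
  have hdetMu : IsUnit M.det := isUnit_iff_ne_zero.mpr hdetM
  set u : (α ⊕ γ) → ℝ := Sum.elim 0 1 with hu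
  -- compute mulVec components
  have hmul_l : ∀ (t : (α ⊕ γ) → ℝ) (a : α), (M *ᵥ t) (Sum.inl a) = - t (Sum.inl a) := by
    intro t a
    simp [hM, Matrix.mulVec, dotProduct, Fintype.sum_sum_type,
      Matrix.one_apply, Finset.sum_ite_eq]
  have hmul_r : ∀ (t : (α ⊕ γ) → ℝ) (b : γ), (M *ᵥ t) (Sum.inr b) =
      -(∑ a, T (Sum.inr b) (Sum.inl a) * t (Sum.inl a))
      - (∑ b', T (Sum.inr b) (Sum.inr b') * t (Sum.inr b')) + t (Sum.inr b) := by
    intro t b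
    simp only [hM, Matrix.mulVec, dotProduct, Fintype.sum_sum_type,
      Matrix.neg_apply, Matrix.fromBlocks_apply₂₁, Matrix.fromBlocks_apply₂₂,
      Matrix.sub_apply, Matrix.one_apply, hS1, hS2, Matrix.of_apply]
    have e1 : ∀ x : γ, -(T (Sum.inr b) (Sum.inr x) - if b = x then 1 else 0) * t (Sum.inr x)
        = -(T (Sum.inr b) (Sum.inr x) * t (Sum.inr x)) + (if b = x then t (Sum.inr x) else 0) := by
      intro x; by_cases h : b = x <;> simp [h] <;> ring
    simp only [e1, neg_mul, Finset.sum_add_distrib, Finset.sum_neg_distrib, Finset.sum_ite_eq,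
      Finset.mem_univ, if_true]
    ring
  -- equivalence
  have key : ∀ t : (α ⊕ γ) → ℝ,
      ((∀ a : α, t (Sum.inl a) = 0) ∧
       (∀ b : γ, t (Sum.inr b) = 1 + ∑ s', T (Sum.inr b) s' * t s')) ↔ M *ᵥ t = u := by
    intro t
    rw [funext_iff, Sum.forall]
    constructor
    · rintro ⟨h0, h1⟩
      constructor
      · intro a; rw [hmul_l, h0]; simp [hu]
      · intro b
        rw [hmul_r]
        have := h1 b
        rw [Fintype.sum_sum_type] at this
        simp only [h0, mul_zero, Finset.sum_const_zero, zero_add] at this ⊢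
        simp [hu]
        linarith [this]
    · rintro ⟨h0, h1⟩
      have h0' : ∀ a, t (Sum.inl a) = 0 := by
        intro a
        have := h0 a
        rw [hmul_l] at this
        simp [hu] at this
        linarith [this]
      refine ⟨h0', fun b => ?_⟩
      have := h1 b
      rw [hmul_r] at this
      simp only [h0', mul_zero, Finset.sum_const_zero, neg_zero, zero_sub] at this
      rw [Fintype.sum_sum_type]
      simp only [h0', mul_zero, Finset.sum_const_zero, zero_add]
      simp [hu] at this
      linarith [this]
  -- the solution
  have hMinv : M⁻¹ * M = 1 := Matrix.nonsing_inv_mul M hdetMu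
  have hMinv' : M * M⁻¹ = 1 := Matrix.mul_nonsing_inv M hdetMu
  set t₀ : (α ⊕ γ) → ℝ := M⁻¹ *ᵥ u with ht₀def
  have ht₀ : M *ᵥ t₀ = u := by
    rw [ht₀def, Matrix.mulVec_mulVec, hMinv', Matrix.one_mulVec]
  have huniq : ∀ t : (α ⊕ γ) → ℝ, M *ᵥ t = u → t = t₀ := by
    intro t ht
    have : M⁻¹ *ᵥ (M *ᵥ t) = M⁻¹ *ᵥ u := by rw [ht]
    rwa [Matrix.mulVec_mulVec, hMinv, Matrix.one_mulVec] at this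
  constructor
  · exact ⟨t₀, (key t₀).mpr ht₀, fun t ht => huniq t ((key t).mp ht)⟩
  · intro t ht s
    have hts : t = t₀ := huniq t ((key t).mp ht)
    have hcram : M.det • (M⁻¹ *ᵥ u) = Matrix.cramer M u :=
      Matrix.det_smul_inv_mulVec_eq_cramer M u hdetMu
    have husum : u = ∑ b : γ, (fun x => if x = Sum.inr b then (1:ℝ) else 0) := by
      funext x
      cases x with
      | inl a => simp [hu]
      | inr b => simp [hu, Finset.sum_ite_eq']
    have : Matrix.cramer M u s = ∑ b : γ,
        Matrix.det (M.updateCol s fun x => if x = Sum.inr b then 1 else 0) := by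
      rw [husum, map_sum]
      simp [Matrix.cramer_apply]
    rw [hts, ht₀def]
    have h2 : M.det * (M⁻¹ *ᵥ u) s = Matrix.cramer M u s := by
      have := congrFun hcram s
      simpa using this
    rw [this] at h2
    rw [← Finset.sum_div, ← h2, mul_comm, mul_div_assoc, div_self hdetM, mul_one]
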